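/- Let R be a reduced commutative ring and Λ a finitely generated free abelian group. Then every unit of the Laurent group ring R[Λ] which maps to 1 under the augmentation R[Λ] → R is, Zariski-locally on Spec R, of the form [λ] for some λ ∈ Λ. In particular, if R is a reduced connected commutative ring, the units of R[Λ] are exactly the products r·[λ] with r ∈ R^× and λ ∈ Λ. -/

import Mathlib

/-- The augmentation ring homomorphism of a group algebra, sending `single m a` to `a`. -/
noncomputable def augmentation (A : Type*) [CommRing A] (M : Type*) [AddCommGroup M] :
    AddMonoidAlgebra A M →+* A :=
  ((AddMonoidAlgebra.lift A A M) 1).toRingHom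



section Helpers

variable {k : Type*} {Γ : Type*}

lemma mul_apply_max [Semiring k] [AddCommGroup Γ] [LinearOrder Γ] [IsOrderedAddMonoid Γ]
    (u v : AddMonoidAlgebra k Γ) {M N : Γ}
    (hu : ∀ a ∈ u.coeff.support, a ≤ M) (hv : ∀ b ∈ v.coeff.support, b ≤ N) :
    (u * v).coeff (M + N) = u.coeff M * v.coeff N := by
  classical
  rw [AddMonoidAlgebra.coeff_mul]
  simp_rw [Finsupp.sum]
  rw [Finset.sum_eq_single M]
  · rw [Finset.sum_eq_single N]
    · rw [if_pos rfl]
    · exact fun b _ hne => if_neg fun he => hne (add_left_cancel he)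
    · intro hN
      rw [if_pos rfl, Finsupp.notMem_support_iff.1 hN, mul_zero]
  · intro a ha hne
    refine Finset.sum_eq_zero fun b hb => if_neg fun he => ?_
    exact absurd he (add_lt_add_of_lt_of_le ((hu a ha).lt_of_ne hne) (hv b hb)).ne
  · intro hM
    refine Finset.sum_eq_zero fun b _ => ?_
    rw [Finsupp.notMem_support_iff.1 hM, zero_mul, ite_self]

lemma mul_apply_min [Semiring k] [AddCommGroup Γ] [LinearOrder Γ] [IsOrderedAddMonoid Γ]
    (u v : AddMonoidAlgebra k Γ) {M N : Γ}
    (hu : ∀ a ∈ u.coeff.support, M ≤ a) (hv : ∀ b ∈ v.coeff.support, N ≤ b) :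
    (u * v).coeff (M + N) = u.coeff M * v.coeff N := by
  classical
  rw [AddMonoidAlgebra.coeff_mul]
  simp_rw [Finsupp.sum]
  rw [Finset.sum_eq_single M]
  · rw [Finset.sum_eq_single N]
    · rw [if_pos rfl]
    · exact fun b _ hne => if_neg fun he => hne (add_left_cancel he)
    · intro hN
      rw [if_pos rfl, Finsupp.notMem_support_iff.1 hN, mul_zero]
  · intro a ha hne
    refine Finset.sum_eq_zero fun b hb => if_neg fun he => ?_
    exact absurd he.symm (add_lt_add_of_lt_of_le ((hu a ha).lt_of_ne (Ne.symm hne)) (hv b hb)).ne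
  · intro hM
    refine Finset.sum_eq_zero fun b _ => ?_
    rw [Finsupp.notMem_support_iff.1 hM, zero_mul, ite_self]

lemma support_singleton_of_mul_eq_one [CommRing k] [IsDomain k] [AddCommGroup Γ] [LinearOrder Γ] [IsOrderedAddMonoid Γ]
    {u v : AddMonoidAlgebra k Γ} (h : u * v = 1) : ∃ μ : Γ, u.coeff.support = {μ} := by
  classical
  have hone : ∀ x : Γ, (1 : AddMonoidAlgebra k Γ).coeff x ≠ 0 → x = 0 := by
    intro x hx
    by_contra hne
    rw [AddMonoidAlgebra.one_def, AddMonoidAlgebra.coeff_single, Finsupp.single_eq_of_ne' (Ne.symm hne)] at hx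
    exact hx rfl
  have hu : u ≠ 0 := by
    rintro rfl
    rw [zero_mul] at h
    have := Finsupp.ext_iff.1 (congrArg AddMonoidAlgebra.coeff h) 0
    simp [AddMonoidAlgebra.one_def] at this
  have hv : v ≠ 0 := by
    rintro rfl
    rw [mul_zero] at h
    have := Finsupp.ext_iff.1 (congrArg AddMonoidAlgebra.coeff h) 0
    simp [AddMonoidAlgebra.one_def] at this
  have hus : u.coeff.support.Nonempty := Finsupp.support_nonempty_iff.2 (by simpa using hu)
  have hvs : v.coeff.support.Nonempty := Finsupp.support_nonempty_iff.2 (by simpa using hv)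
  set Mu := u.coeff.support.max' hus with hMu
  set Mv := v.coeff.support.max' hvs with hMv
  set mu := u.coeff.support.min' hus with hmu
  set mv := v.coeff.support.min' hvs with hmv
  have hMax : (u * v).coeff (Mu + Mv) = u.coeff Mu * v.coeff Mv :=
    mul_apply_max u v (fun a ha => Finset.le_max' _ a ha) (fun b hb => Finset.le_max' _ b hb)
  have hMin : (u * v).coeff (mu + mv) = u.coeff mu * v.coeff mv :=
    mul_apply_min u v (fun a ha => Finset.min'_le _ a ha) (fun b hb => Finset.min'_le _ b hb)
  have hM0 : Mu + Mv = 0 := by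
    apply hone
    rw [← h, hMax]
    exact mul_ne_zero (Finsupp.mem_support_iff.1 (u.coeff.support.max'_mem hus))
      (Finsupp.mem_support_iff.1 (v.coeff.support.max'_mem hvs))
  have hm0 : mu + mv = 0 := by
    apply hone
    rw [← h, hMin]
    exact mul_ne_zero (Finsupp.mem_support_iff.1 (u.coeff.support.min'_mem hus))
      (Finsupp.mem_support_iff.1 (v.coeff.support.min'_mem hvs))
  have hle : mu ≤ Mu := Finset.min'_le _ _ (u.coeff.support.max'_mem hus)
  have hvle : mv ≤ Mv := Finset.min'_le _ _ (v.coeff.support.max'_mem hvs)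
  have heq : Mu = mu := by
    have h1 : Mu = -Mv := eq_neg_of_add_eq_zero_left hM0
    have h2 : mu = -mv := eq_neg_of_add_eq_zero_left hm0
    have : -Mv ≤ -mv := neg_le_neg hvle
    exact le_antisymm (h1 ▸ h2 ▸ this) hle
  refine ⟨Mu, Finset.eq_singleton_iff_unique_mem.2 ⟨u.coeff.support.max'_mem hus, fun x hx => ?_⟩⟩
  exact le_antisymm (Finset.le_max' _ x hx) (heq ▸ Finset.min'_le _ x hx)

end Helpers



section CoeffMap

variable {R S Γ : Type*} [CommRing R] [CommRing S] [AddCommGroup Γ]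

/-- The ring hom `R[Γ] →+* S[Γ]` induced by a ring hom `R →+* S` on coefficients. -/
noncomputable def coeffMap (f : R →+* S) : AddMonoidAlgebra R Γ →+* AddMonoidAlgebra S Γ :=
  AddMonoidAlgebra.liftNCRingHom (AddMonoidAlgebra.singleZeroRingHom.comp f)
    (AddMonoidAlgebra.of S Γ) (fun _ _ => Commute.all _ _)

lemma coeffMap_single (f : R →+* S) (a : Γ) (b : R) :
    coeffMap f (AddMonoidAlgebra.single a b) = AddMonoidAlgebra.single a (f b) := by
  classical
  rw [coeffMap, AddMonoidAlgebra.liftNCRingHom_single]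
  show AddMonoidAlgebra.single 0 (f b) * AddMonoidAlgebra.single a 1 = _
  rw [AddMonoidAlgebra.single_mul_single, zero_add, mul_one]

lemma coeffMap_apply (f : R →+* S) (x : AddMonoidAlgebra R Γ) (γ : Γ) :
    (coeffMap f x).coeff γ = f (x.coeff γ) := by
  classical
  induction x using AddMonoidAlgebra.induction_linear with
  | zero => simp
  | add a b ha hb => rw [map_add, AddMonoidAlgebra.coeff_add, AddMonoidAlgebra.coeff_add, Finsupp.add_apply, Finsupp.add_apply, map_add, ha, hb]
  | single a b =>
      rw [coeffMap_single]
      simp [AddMonoidAlgebra.coeff_single, Finsupp.single_apply, apply_ite f]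

lemma augmentation_single {A : Type*} [CommRing A] {M : Type*} [AddCommGroup M] (a : M) (b : A) :
    augmentation A M (AddMonoidAlgebra.single a b) = b := by
  simp [augmentation, AddMonoidAlgebra.lift_single]

lemma augmentation_coeffMap (f : R →+* S) (x : AddMonoidAlgebra R Γ) :
    augmentation S Γ (coeffMap f x) = f (augmentation R Γ x) := by
  induction x using AddMonoidAlgebra.induction_linear with
  | zero => simp
  | add a b ha hb => rw [map_add, map_add, map_add, map_add, ha, hb]
  | single a b => rw [coeffMap_single, augmentation_single, augmentation_single]

end CoeffMap

section Key

variable {R Γ : Type*} [CommRing R] [IsReduced R] [AddCommGroup Γ] [LinearOrder Γ] [IsOrderedAddMonoid Γ]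

lemma eq_zero_of_forall_prime {x : R} (h : ∀ (p : Ideal R), p.IsPrime → x ∈ p) : x = 0 := by
  have hx : x ∈ nilradical R := by
    rw [nilradical_eq_sInf]
    exact Ideal.mem_sInf.2 fun {I} hI => h I hI
  exact (IsReduced.eq_zero x) (mem_nilradical.1 hx)

lemma modp {u v : AddMonoidAlgebra R Γ} (huv : u * v = 1) (haug : augmentation R Γ u = 1)
    (p : Ideal R) [hp : p.IsPrime] :
    ∃ μ : Γ, u.coeff μ ∉ p ∧
      (∀ γ : Γ, Ideal.Quotient.mk p (u.coeff γ) = if γ = μ then 1 else 0) ∧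
      (∀ γ : Γ, Ideal.Quotient.mk p (v.coeff (-γ)) = if γ = μ then 1 else 0) := by
  classical
  set f := coeffMap (Γ := Γ) (Ideal.Quotient.mk p) with hf
  have huv' : f u * f v = 1 := by rw [← map_mul, huv, map_one]
  obtain ⟨μ, hμ⟩ := support_singleton_of_mul_eq_one huv'
  obtain ⟨ν, hν⟩ := support_singleton_of_mul_eq_one (show f v * f u = 1 by rwa [mul_comm])
  obtain ⟨hcne, hueq⟩ := Finsupp.support_eq_singleton.1 hμ
  obtain ⟨hdne, hveq⟩ := Finsupp.support_eq_singleton.1 hν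
  replace hueq := AddMonoidAlgebra.ext (hueq.trans (AddMonoidAlgebra.coeff_single _ _).symm)
  replace hveq := AddMonoidAlgebra.ext (hveq.trans (AddMonoidAlgebra.coeff_single _ _).symm)
  set d := (f v).coeff ν with hd
  have hc1 : (f u).coeff μ = 1 := by
    have ha : augmentation (R ⧸ p) Γ (f u) = 1 := by
      rw [augmentation_coeffMap, haug, map_one]
    rw [hueq, augmentation_single] at ha
    exact ha
  rw [hc1] at hueq
  have hprod : AddMonoidAlgebra.single (μ + ν) d = 1 := by
    rw [← huv', hueq, hveq, AddMonoidAlgebra.single_mul_single, one_mul]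
  rw [AddMonoidAlgebra.one_def] at hprod
  rcases AddMonoidAlgebra.single_inj.1 hprod with ⟨hμν, hd1⟩ | ⟨_, h10⟩
  · have hνμ : ν = -μ := by
      rw [eq_neg_of_add_eq_zero_right hμν]
    rw [hd1] at hveq
    refine ⟨μ, ?_, ?_, ?_⟩
    · rw [← Ideal.Quotient.eq_zero_iff_mem, ← coeffMap_apply (Ideal.Quotient.mk p) u μ, ← hf, hc1]
      exact one_ne_zero
    · intro γ
      rw [← coeffMap_apply (Ideal.Quotient.mk p) u γ, ← hf, hueq, AddMonoidAlgebra.coeff_single, Finsupp.single_apply]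
      simp only [eq_comm]
    · intro γ
      rw [← coeffMap_apply (Ideal.Quotient.mk p) v (-γ), ← hf, hveq, hνμ,
        AddMonoidAlgebra.coeff_single, Finsupp.single_apply]
      by_cases h : γ = μ
      · simp [h]
      · rw [if_neg (fun hh => h (neg_inj.mp hh).symm), if_neg h]
  · exact absurd h10 one_ne_zero

lemma sum_equivFin {M : Type*} [AddCommMonoid M] {α : Type*} (S : Finset α) (g : α → M) :
    ∑ i : Fin S.card, g ((S.equivFin.symm i : S) : α) = ∑ γ ∈ S, g γ := by
  rw [Equiv.sum_comp S.equivFin.symm (fun (x : S) => g ↑x)]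
  exact Finset.sum_coe_sort S g

lemma key {u v : AddMonoidAlgebra R Γ} (huv : u * v = 1) (haug : augmentation R Γ u = 1) :
    ∃ (n : ℕ) (e : Fin n → R) (ls : Fin n → Γ),
      (∀ i, IsIdempotentElem (e i)) ∧ (∀ i j, i ≠ j → e i * e j = 0) ∧ (∑ i, e i = 1) ∧
      u = ∑ i, AddMonoidAlgebra.single (ls i) (e i) := by
  classical
  set S := u.coeff.support with hS
  set E : Γ → R := fun γ => u.coeff γ * v.coeff (-γ) with hE
  set ls : Fin S.card → Γ := fun i => ((S.equivFin.symm i : S) : Γ) with hls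
  have hls_inj : Function.Injective ls := fun i j h =>
    S.equivFin.symm.injective (Subtype.coe_injective h)
  -- pointwise facts via primes
  have hEmod : ∀ (p : Ideal R) (_ : p.IsPrime) (γ : Γ), ∃ μ : Γ, u.coeff μ ∉ p ∧
      Ideal.Quotient.mk p (E γ) = if γ = μ then 1 else 0 := by
    intro p hp γ
    haveI := hp
    obtain ⟨μ, hμp, hu, hv⟩ := modp huv haug p
    refine ⟨μ, hμp, ?_⟩
    rw [hE]
    simp only [map_mul, hu γ, hv γ]
    by_cases h : γ = μ <;> simp [h]
  have h1 : ∀ γ, IsIdempotentElem (E γ) := by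
    intro γ
    have : E γ * E γ - E γ = 0 := by
      apply eq_zero_of_forall_prime
      intro p hp
      haveI := hp
      rw [← Ideal.Quotient.eq_zero_iff_mem]
      obtain ⟨μ, _, hEγ⟩ := hEmod p hp γ
      rw [map_sub, map_mul, hEγ]
      by_cases h : γ = μ <;> simp [h]
    exact sub_eq_zero.1 this
  have h2 : ∀ γ γ', γ ≠ γ' → E γ * E γ' = 0 := by
    intro γ γ' hne
    apply eq_zero_of_forall_prime
    intro p hp
    haveI := hp
    rw [← Ideal.Quotient.eq_zero_iff_mem]
    obtain ⟨μ, hμp, hu, hv⟩ := modp huv haug p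
    rw [hE]
    simp only [map_mul, hu, hv]
    by_cases h : γ = μ
    · have h' : γ' ≠ μ := fun hh => hne (h.trans hh.symm)
      simp [h, h']
    · simp [h]
  have h3 : ∑ γ ∈ S, E γ = 1 := by
    have : (∑ γ ∈ S, E γ) - 1 = 0 := by
      apply eq_zero_of_forall_prime
      intro p hp
      haveI := hp
      rw [← Ideal.Quotient.eq_zero_iff_mem]
      obtain ⟨μ, hμp, hu, hv⟩ := modp huv haug p
      have hμS : μ ∈ S := by
        rw [hS, Finsupp.mem_support_iff]
        intro h0
        exact hμp (h0 ▸ p.zero_mem)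
      rw [map_sub, map_sum, map_one]
      have : ∀ γ ∈ S, Ideal.Quotient.mk p (E γ) = if γ = μ then 1 else 0 := by
        intro γ _
        rw [hE]
        simp only [map_mul, hu γ, hv γ]
        by_cases h : γ = μ <;> simp [h]
      rw [Finset.sum_congr rfl this, Finset.sum_ite_eq' S μ (fun _ => (1 : R ⧸ p)), if_pos hμS,
        sub_self]
    have h' := sub_eq_zero.1 this
    exact h'
  have h4 : u = ∑ γ ∈ S, AddMonoidAlgebra.single γ (E γ) := by
    ext γ0
    rw [AddMonoidAlgebra.coeff_sum, Finset.sum_apply']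
    simp only [AddMonoidAlgebra.coeff_single, Finsupp.single_apply]
    rw [Finset.sum_ite_eq' S γ0 (fun γ => E γ)]
    have : u.coeff γ0 - (if γ0 ∈ S then E γ0 else 0) = 0 := by
      apply eq_zero_of_forall_prime
      intro p hp
      haveI := hp
      rw [← Ideal.Quotient.eq_zero_iff_mem]
      obtain ⟨μ, hμp, hu, hv⟩ := modp huv haug p
      have hμS : μ ∈ S := by
        rw [hS, Finsupp.mem_support_iff]
        intro h0
        exact hμp (h0 ▸ p.zero_mem)
      rw [map_sub, hu γ0, apply_ite (Ideal.Quotient.mk p), map_zero]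
      have hEγ0 : Ideal.Quotient.mk p (E γ0) = if γ0 = μ then 1 else 0 := by
        rw [hE]; simp only [map_mul, hu γ0, hv γ0]
        by_cases h : γ0 = μ <;> simp [h]
      rw [hEγ0]
      by_cases h : γ0 = μ
      · subst h
        simp [hμS]
      · simp [h]
    have := sub_eq_zero.1 this
    rw [this]
  refine ⟨S.card, fun i => E (ls i), ls, fun i => h1 (ls i),
    fun i j hij => h2 (ls i) (ls j) (fun h => hij (hls_inj h)), ?_, ?_⟩
  · exact (sum_equivFin S E).trans h3
  · exact h4.trans (sum_equivFin S (fun γ => AddMonoidAlgebra.single γ (E γ))).symm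

end Key

section Main

lemma augmentation_domCongr {A : Type*} [CommRing A] {M N : Type*} [AddCommGroup M]
    [AddCommGroup N] (φ : M ≃+ N) (x : AddMonoidAlgebra A M) :
    augmentation A N (AddMonoidAlgebra.domCongr A A φ x) = augmentation A M x := by
  induction x using AddMonoidAlgebra.induction_linear with
  | zero => simp
  | add a b ha hb => rw [map_add, map_add, map_add, ha, hb]
  | single a b => rw [AddMonoidAlgebra.domCongr_single, augmentation_single, augmentation_single]

/-- transported version of `key` for an arbitrary f.g. free abelian group. -/
lemma key' {R : Type*} [CommRing R] [IsReduced R] (Λ : Type*) [AddCommGroup Λ]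
    [Module.Free ℤ Λ] [Module.Finite ℤ Λ] (u : (AddMonoidAlgebra R Λ)ˣ)
    (haug : augmentation R Λ (u : AddMonoidAlgebra R Λ) = 1) :
    ∃ (n : ℕ) (e : Fin n → R) (ls : Fin n → Λ),
      (∀ i, IsIdempotentElem (e i)) ∧
      (∀ i j, i ≠ j → e i * e j = 0) ∧
      (∑ i, e i = 1) ∧
      (u : AddMonoidAlgebra R Λ) = ∑ i, AddMonoidAlgebra.single (ls i) (e i) := by
  classical
  set ι := Module.Free.ChooseBasisIndex ℤ Λ with hι
  let b := Module.Free.chooseBasis ℤ Λ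
  set m := Fintype.card ι with hm
  let Γ := Lex (Fin m →₀ ℤ)
  let φ1 : Λ ≃+ (ι →₀ ℤ) := b.repr.toAddEquiv
  let φ2 : (ι →₀ ℤ) ≃+ (Fin m →₀ ℤ) :=
    (Finsupp.domLCongr (R := ℤ) (M := ℤ) (Fintype.equivFin ι)).toAddEquiv
  let φ3 : (Fin m →₀ ℤ) ≃+ Γ := { toLex with map_add' := fun _ _ => rfl }
  let φ : Λ ≃+ Γ := (φ1.trans φ2).trans φ3
  let ψ : AddMonoidAlgebra R Λ ≃ₐ[R] AddMonoidAlgebra R Γ := AddMonoidAlgebra.domCongr R R φ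
  have huv : ψ (u : AddMonoidAlgebra R Λ) * ψ ((u⁻¹ : _) : AddMonoidAlgebra R Λ) = 1 := by
    rw [← map_mul, u.mul_inv, map_one]
  have haug' : augmentation R Γ (ψ (u : AddMonoidAlgebra R Λ)) = 1 := by
    rw [show (ψ (u : AddMonoidAlgebra R Λ)) = AddMonoidAlgebra.domCongr R R φ _ from rfl,
      augmentation_domCongr, haug]
  obtain ⟨n, e, ls', h1, h2, h3, h4⟩ := key huv haug'
  refine ⟨n, e, fun i => φ.symm (ls' i), h1, h2, h3, ?_⟩
  apply ψ.injective
  rw [h4, map_sum]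
  refine Finset.sum_congr rfl fun i _ => ?_
  rw [show ψ (AddMonoidAlgebra.single (φ.symm (ls' i)) (e i)) =
    AddMonoidAlgebra.domCongr R R φ (AddMonoidAlgebra.single (φ.symm (ls' i)) (e i)) from rfl,
    AddMonoidAlgebra.domCongr_single, φ.apply_symm_apply]

end Main

/-- Let `R` be a reduced commutative ring and `Λ` a finitely generated free abelian
group.  Every unit of `R[Λ]` mapping to `1` under the augmentation is Zariski-locally of
the form `[λ]`: it equals `Σ_i e_i·[λ_i]` for a complete orthogonal family of
idempotents `e_i` of `R` and `λ_i ∈ Λ`.  In particular if `R` is moreover connected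
(its only idempotents are `0` and `1`), every unit of `R[Λ]` is `r·[λ]` with `r ∈ Rˣ`,
`λ ∈ Λ`. -/
theorem units_of_laurent_over_reduced {R : Type*} [CommRing R] [IsReduced R]
    (Λ : Type*) [AddCommGroup Λ] [Module.Free ℤ Λ] [Module.Finite ℤ Λ] :
    (∀ u : (AddMonoidAlgebra R Λ)ˣ,
      augmentation R Λ (u : AddMonoidAlgebra R Λ) = 1 →
      ∃ (n : ℕ) (e : Fin n → R) (ls : Fin n → Λ),
        (∀ i, IsIdempotentElem (e i)) ∧
        (∀ i j, i ≠ j → e i * e j = 0) ∧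
        (∑ i, e i = 1) ∧
        (u : AddMonoidAlgebra R Λ) = ∑ i, AddMonoidAlgebra.single (ls i) (e i)) ∧
    ((∀ e : R, IsIdempotentElem e → e = 0 ∨ e = 1) →
      ∀ u : (AddMonoidAlgebra R Λ)ˣ,
        ∃ (r : Rˣ) (l : Λ),
          (u : AddMonoidAlgebra R Λ) = AddMonoidAlgebra.single l (r : R)) := by
  classical
  refine ⟨fun u haug => key' Λ u haug, fun hconn u => ?_⟩
  rcases subsingleton_or_nontrivial R with hR | hR
  · exact ⟨1, 0, Subsingleton.elim _ _⟩
  -- normalize the augmentation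
  set a : Rˣ := Units.map (augmentation R Λ) u with ha
  set c : (AddMonoidAlgebra R Λ)ˣ :=
    Units.map (AddMonoidAlgebra.singleZeroRingHom (R := R) (M := Λ)).toMonoidHom a⁻¹ with hc
  have hcval : (c : AddMonoidAlgebra R Λ) = AddMonoidAlgebra.single 0 ((a⁻¹ : Rˣ) : R) := rfl
  have hcinv : ((c⁻¹ : _) : AddMonoidAlgebra R Λ) = AddMonoidAlgebra.single 0 ((a : Rˣ) : R) := by
    rw [hc, ← map_inv (Units.map (AddMonoidAlgebra.singleZeroRingHom (R := R) (M := Λ)).toMonoidHom) a⁻¹, inv_inv]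
    rfl
  set w : (AddMonoidAlgebra R Λ)ˣ := u * c with hw
  have haugw : augmentation R Λ (w : AddMonoidAlgebra R Λ) = 1 := by
    rw [hw, Units.val_mul, map_mul, hcval, augmentation_single]
    have : augmentation R Λ (u : AddMonoidAlgebra R Λ) = (a : R) := rfl
    rw [this]
    exact a.mul_inv
  obtain ⟨n, e, ls, h1, h2, h3, h4⟩ := key' Λ w haugw
  -- exactly one idempotent is 1
  have hex : ∃ i, e i = 1 := by
    by_contra hno
    push_neg at hno
    have : ∀ i ∈ (Finset.univ : Finset (Fin n)), e i = 0 := by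
      intro i _
      rcases hconn (e i) (h1 i) with h | h
      · exact h
      · exact absurd h (hno i)
    rw [Finset.sum_congr rfl this, Finset.sum_const_zero] at h3
    exact zero_ne_one h3
  obtain ⟨i0, hi0⟩ := hex
  have hothers : ∀ j, j ≠ i0 → e j = 0 := by
    intro j hj
    have := h2 j i0 hj
    rwa [hi0, mul_one] at this
  have hwval : (w : AddMonoidAlgebra R Λ) = AddMonoidAlgebra.single (ls i0) 1 := by
    rw [h4, Finset.sum_eq_single_of_mem i0 (Finset.mem_univ i0), hi0]
    intro j _ hj
    rw [hothers j hj]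
    exact AddMonoidAlgebra.single_zero _
  refine ⟨a, ls i0, ?_⟩
  have : (u : AddMonoidAlgebra R Λ) = (w : AddMonoidAlgebra R Λ) * ((c⁻¹ : _) : AddMonoidAlgebra R Λ) := by
    rw [hw, Units.val_mul, mul_assoc, Units.mul_inv, mul_one]
  rw [this, hwval, hcinv, AddMonoidAlgebra.single_mul_single, add_zero, one_mul]
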